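/- arXiv:1512.06645 — 3 statements merged into one kernel-verified Lean document; each statement's English description precedes it below -/
import Mathlib

section
/- Fix K ≥ 1, positive reals σ₁², ..., σ_K², and Λ, Γ > 0. Consider the minimax value V = min over nonnegative (Λ₁,...,Λ_K) with Λ₁+⋯+Λ_K ≤ Λ of max over k of (1/2)·log(1 + Γ/(σ_k² + Λ_k)). Let c be the unique constant such that the waterfilling choice Λ_k* = max(c - σ_k², 0) satisfies Σ_k Λ_k* = Λ. Then V = (1/2)·log(1 + Γ/c). -/
open scoped BigOperators

private lemma log_mono_aux {Γ a b : ℝ} (hΓ : 0 < Γ) (ha : 0 < a) (hab : a ≤ b) :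
    (1 / 2) * Real.log (1 + Γ / b) ≤ (1 / 2) * Real.log (1 + Γ / a) := by
  have hb : 0 < b := lt_of_lt_of_le ha hab
  have h1 : (0:ℝ) < 1 + Γ / b := by positivity
  have h2 : 1 + Γ / b ≤ 1 + Γ / a := by gcongr
  have := Real.log_le_log h1 h2
  linarith

/-- The jammer's minimax power-allocation problem: the minimum over nonnegative
allocations `Λ₁ + ⋯ + Λ_K ≤ Λ` of the best single-subchannel rate
`max_k (1/2)·log(1 + Γ/(σ_k² + Λ_k))` equals `(1/2)·log(1 + Γ/c)`, where `c` is the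
waterfilling level with `∑_k max(c - σ_k², 0) = Λ`. -/
theorem stmt3 {K : ℕ} (hK : 0 < K) (σ : Fin K → ℝ) (hσ : ∀ k, 0 < σ k)
    (Λ Γ : ℝ) (hΛ : 0 < Λ) (hΓ : 0 < Γ)
    (c : ℝ) (hc : ∑ k, max (c - σ k) 0 = Λ) :
    sInf {v : ℝ | ∃ L : Fin K → ℝ, (∀ k, 0 ≤ L k) ∧ (∑ k, L k) ≤ Λ ∧
        v = ⨆ k : Fin K, (1 / 2) * Real.log (1 + Γ / (σ k + L k))} =
      (1 / 2) * Real.log (1 + Γ / c) := by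
  haveI : Nonempty (Fin K) := Fin.pos_iff_nonempty.mp hK
  -- there is a channel below water level
  obtain ⟨k0, hk0⟩ : ∃ k0, σ k0 < c := by
    by_contra h
    push_neg at h
    have : ∑ k, max (c - σ k) 0 = 0 := by
      apply Finset.sum_eq_zero
      intro k _
      simp [max_eq_right, sub_nonpos.mpr (h k)]
    linarith [hc]
  have hc0 : 0 < c := lt_trans (hσ k0) hk0
  set T : ℝ := (1 / 2) * Real.log (1 + Γ / c) with hT
  -- lower bound: every element of the set is ≥ T
  have hlb : ∀ v ∈ {v : ℝ | ∃ L : Fin K → ℝ, (∀ k, 0 ≤ L k) ∧ (∑ k, L k) ≤ Λ ∧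
      v = ⨆ k : Fin K, (1 / 2) * Real.log (1 + Γ / (σ k + L k))}, T ≤ v := by
    rintro v ⟨L, hL0, hLsum, rfl⟩
    obtain ⟨k, hk⟩ : ∃ k, σ k + L k ≤ c := by
      by_contra h
      push_neg at h
      have hlt : ∑ k, max (c - σ k) 0 < ∑ k, L k := by
        apply Finset.sum_lt_sum
        · intro i _
          rcases le_or_gt (c - σ i) 0 with h1 | h1
          · simpa [max_eq_right h1] using hL0 i
          · rw [max_eq_left h1.le]; linarith [h i]
        · exact ⟨k0, Finset.mem_univ k0, by rw [max_eq_left (by linarith : (0:ℝ) ≤ c - σ k0)]; linarith [h k0]⟩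
      rw [hc] at hlt; linarith
    have hk' : (0:ℝ) < σ k + L k := lt_of_lt_of_le (hσ k) (by linarith [hL0 k])
    have h1 : T ≤ (1 / 2) * Real.log (1 + Γ / (σ k + L k)) :=
      log_mono_aux hΓ hk' hk
    exact le_trans h1 (le_ciSup (f := fun k => (1 / 2) * Real.log (1 + Γ / (σ k + L k)))
      (Set.Finite.bddAbove (Set.finite_range _)) k)
  -- membership: waterfilling achieves T
  have hmem : T ∈ {v : ℝ | ∃ L : Fin K → ℝ, (∀ k, 0 ≤ L k) ∧ (∑ k, L k) ≤ Λ ∧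
      v = ⨆ k : Fin K, (1 / 2) * Real.log (1 + Γ / (σ k + L k))} := by
    refine ⟨fun k => max (c - σ k) 0, fun k => le_max_right _ _, le_of_eq hc, ?_⟩
    have hval : ∀ k, σ k + max (c - σ k) 0 = max c (σ k) := by
      intro k
      rcases le_or_gt (c - σ k) 0 with h1 | h1
      · rw [max_eq_right h1, max_eq_right (by linarith)]; ring
      · rw [max_eq_left h1.le, max_eq_left (by linarith)]; ring
    apply le_antisymm
    · have : (1 / 2) * Real.log (1 + Γ / (σ k0 + max (c - σ k0) 0)) = T := by
        rw [hval k0, max_eq_left hk0.le]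
      rw [← this]
      exact le_ciSup (f := fun k => (1 / 2) * Real.log (1 + Γ / (σ k + max (c - σ k) 0)))
        (Set.Finite.bddAbove (Set.finite_range _)) k0
    · apply ciSup_le
      intro k
      rw [hval k]
      exact log_mono_aux hΓ hc0 (le_max_left _ _)
  exact le_antisymm (csInf_le ⟨T, hlb⟩ hmem) (le_csInf ⟨T, hmem⟩ hlb)
end

section
/- Let (X, κ) be a random pair with X real-valued, κ ∈ {1,...,K}, E[X²] = Γ, and for each k the conditional distribution of X given κ = k symmetric about 0. Let Z : ℝ × {1,...,K} → ℝ^K assign to each (x', k') a random vector Z_{x',k'} with finite second moments, and suppose the symmetrization identity x·e_k + E[Z_{x',k'}] = x'·e_{k'} + E[Z_{x,k}] holds for all pairs (x,k), (x',k') in the support, where e_k is the k-th standard basis vector of ℝ^K. Then for every (x',k') in the support, E[‖Z_{X,κ}‖²] ≥ Γ. -/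
open MeasureTheory
open scoped BigOperators

private lemma sq_integral_le_aux {Ω' : Type*} [MeasurableSpace Ω'] (ν : Measure Ω')
    [IsProbabilityMeasure ν] (f : Ω' → ℝ) (hf : Integrable f ν)
    (hf2 : Integrable (fun ω => f ω ^ 2) ν) :
    (∫ ω, f ω ∂ν) ^ 2 ≤ ∫ ω, f ω ^ 2 ∂ν := by
  have hmem : MemLp f 2 ν := (memLp_two_iff_integrable_sq hf.aestronglyMeasurable).2 hf2
  have h := ProbabilityTheory.variance_nonneg f ν
  rw [ProbabilityTheory.variance_eq_sub hmem] at h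
  simpa [Pi.pow_apply] using h

/-- Core nonsymmetrizability estimate (direct part of Theorem 1): let `(X, κ)` be a
finitely supported random pair with pmf `p` on `ℝ × {1,…,K}`, `E[X²] = Γ`, and each
conditional distribution of `X` given `κ = k` symmetric about `0`. If the random vectors
`Z_{x,k}` in `ℝ^K` satisfy the symmetrization identity
`x·e_k + E[Z_{x',k'}] = x'·e_{k'} + E[Z_{x,k}]` for all pairs in the support of `p`,
then the mean jammer power satisfies `E[‖Z_{X,κ}‖²] ≥ Γ`. -/
theorem stmt9 {Ω' : Type*} [MeasurableSpace Ω'] (ν : Measure Ω') [IsProbabilityMeasure ν]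
    {K : ℕ} (hK : 0 < K)
    (S : Finset (ℝ × Fin K)) (p : ℝ × Fin K → ℝ)
    (hp0 : ∀ x, 0 ≤ p x) (hsupp : ∀ x ∉ S, p x = 0) (hp1 : ∑ x ∈ S, p x = 1)
    (Γ : ℝ) (hΓ : ∑ x ∈ S, p x * x.1 ^ 2 = Γ)
    (hsym : ∀ (x : ℝ) (k : Fin K), p (x, k) = p (-x, k))
    (Z : ℝ × Fin K → Ω' → EuclideanSpace ℝ (Fin K))
    (hZint : ∀ xk, Integrable (Z xk) ν)
    (hZ2 : ∀ xk, Integrable (fun ω => ‖Z xk ω‖ ^ 2) ν)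
    (hsymmetrize : ∀ (x : ℝ) (k : Fin K) (x' : ℝ) (k' : Fin K),
      p (x, k) ≠ 0 → p (x', k') ≠ 0 →
      x • (EuclideanSpace.single k (1 : ℝ)) + ∫ ω, Z (x', k') ω ∂ν =
        x' • (EuclideanSpace.single k' (1 : ℝ)) + ∫ ω, Z (x, k) ω ∂ν) :
    ∑ xk ∈ S, p xk * ∫ ω, ‖Z xk ω‖ ^ 2 ∂ν ≥ Γ := by
  classical
  -- a point in the support
  have hex : ∃ q ∈ S, p q ≠ 0 := by
    by_contra h
    push_neg at h
    rw [Finset.sum_eq_zero h] at hp1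
    norm_num at hp1
  obtain ⟨q0, hq0S, hq0⟩ := hex
  set m : ℝ × Fin K → EuclideanSpace ℝ (Fin K) := fun xk => ∫ ω, Z xk ω ∂ν with hm
  set c : EuclideanSpace ℝ (Fin K) :=
    m q0 - q0.1 • EuclideanSpace.single q0.2 (1 : ℝ) with hc
  -- the mean of Z on the support is affine
  have hmc : ∀ x k, p (x, k) ≠ 0 →
      m (x, k) = x • EuclideanSpace.single k (1 : ℝ) + c := by
    intro x k hpk
    have h := hsymmetrize x k q0.1 q0.2 hpk (by simpa using hq0)
    rw [hc, ← add_sub_assoc, eq_sub_iff_add_eq, add_comm (m (x, k))]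
    exact h.symm
  -- coordinate value
  have hcoord : ∀ x k, p (x, k) ≠ 0 → (m (x, k)) k = x + c k := by
    intro x k hpk
    rw [hmc x k hpk]
    simp [EuclideanSpace.single_apply]
  -- Jensen chain
  have hjensen : ∀ x k, p (x, k) ≠ 0 → (x + c k) ^ 2 ≤ ∫ ω, ‖Z (x, k) ω‖ ^ 2 ∂ν := by
    intro x k hpk
    have h1 : (x + c k) ^ 2 ≤ ‖m (x, k)‖ ^ 2 := by
      rw [← hcoord x k hpk]
      have := EuclideanSpace.norm_eq (m (x, k))
      rw [this, Real.sq_sqrt (Finset.sum_nonneg fun i _ => sq_nonneg _)]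
      have : ((m (x, k)) k) ^ 2 ≤ ∑ i, ((m (x, k)) i) ^ 2 :=
        Finset.single_le_sum (f := fun i => ((m (x, k)) i) ^ 2)
          (fun i _ => sq_nonneg _) (Finset.mem_univ k)
      simpa [Real.norm_eq_abs, sq_abs] using this
    have h2 : ‖m (x, k)‖ ^ 2 ≤ (∫ ω, ‖Z (x, k) ω‖ ∂ν) ^ 2 := by
      have hle : ‖m (x, k)‖ ≤ ∫ ω, ‖Z (x, k) ω‖ ∂ν :=
        norm_integral_le_integral_norm _
      exact pow_le_pow_left₀ (norm_nonneg _) hle 2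
    have h3 : (∫ ω, ‖Z (x, k) ω‖ ∂ν) ^ 2 ≤ ∫ ω, ‖Z (x, k) ω‖ ^ 2 ∂ν :=
      sq_integral_le_aux ν _ (hZint (x, k)).norm (hZ2 (x, k))
    linarith
  -- pointwise bound on the sum
  have hA : ∑ xk ∈ S, p xk * (xk.1 + c xk.2) ^ 2 ≤ ∑ xk ∈ S, p xk * ∫ ω, ‖Z xk ω‖ ^ 2 ∂ν := by
    refine Finset.sum_le_sum fun xk _ => ?_
    by_cases hpk : p xk = 0
    · simp [hpk]
    · exact mul_le_mul_of_nonneg_left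
        (by simpa using hjensen xk.1 xk.2 (by simpa using hpk)) (hp0 xk)
  -- cross term vanishes
  have hcross : ∑ xk ∈ S, p xk * (xk.1 * c xk.2) = 0 := by
    have hfil : ∑ xk ∈ S, p xk * (xk.1 * c xk.2)
        = ∑ xk ∈ S.filter (fun xk => p xk ≠ 0), p xk * (xk.1 * c xk.2) := by
      refine (Finset.sum_subset (Finset.filter_subset _ _) ?_).symm
      intro xk hxkS hxk
      have : p xk = 0 := by
        by_contra hne
        exact hxk (Finset.mem_filter.mpr ⟨hxkS, hne⟩)
      simp [this]
    rw [hfil]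
    refine Finset.sum_involution (fun q _ => (-q.1, q.2)) ?_ ?_ ?_ ?_
    · rintro ⟨x, k⟩ hq
      show p (x, k) * (x * c k) + p (-x, k) * (-x * c k) = 0
      rw [← hsym x k]
      ring
    · intro q hq hne heq
      apply hne
      have h1 : -q.1 = q.1 := congrArg Prod.fst heq
      have : q.1 = 0 := by linarith
      simp [this]
    · intro q hq
      rw [Finset.mem_filter] at hq ⊢
      have hps : p (-q.1, q.2) = p (q.1, q.2) := (hsym q.1 q.2).symm
      have hpq : p (q.1, q.2) ≠ 0 := by simpa using hq.2
      refine ⟨?_, by simpa [hps] using hpq⟩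
      by_contra hne
      exact (hps ▸ hpq) (hsupp _ hne)
    · intro q hq
      simp
  -- assemble
  have hexpand : ∑ xk ∈ S, p xk * (xk.1 + c xk.2) ^ 2
      = ∑ xk ∈ S, p xk * xk.1 ^ 2 + 2 * ∑ xk ∈ S, p xk * (xk.1 * c xk.2)
        + ∑ xk ∈ S, p xk * (c xk.2) ^ 2 := by
    rw [Finset.mul_sum, ← Finset.sum_add_distrib, ← Finset.sum_add_distrib]
    exact Finset.sum_congr rfl fun xk _ => by ring
  have hpos : 0 ≤ ∑ xk ∈ S, p xk * (c xk.2) ^ 2 :=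
    Finset.sum_nonneg fun xk _ => mul_nonneg (hp0 xk) (sq_nonneg _)
  rw [ge_iff_le, ← hΓ]
  calc ∑ xk ∈ S, p xk * xk.1 ^ 2
      ≤ ∑ xk ∈ S, p xk * (xk.1 + c xk.2) ^ 2 := by
        rw [hexpand, hcross]; linarith
    _ ≤ _ := hA
end

section
/- Let Λ₁,...,Λ_K ≥ 0 with Σ Λ_k = Λ be arbitrary, let Λ₁*,...,Λ_K* be the waterfilling allocation at level c (Λ_k* = max(c − σ_k², 0), Σ Λ_k* = Λ). Then max_k (1/2)log(1 + Γ/(σ_k² + Λ_k)) ≥ (1/2)log(1 + Γ/c), i.e., against any non-waterfilling jammer allocation the sender can find a subchannel at least as good as the water level c. -/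
open scoped BigOperators

/-- Against any jammer power allocation `Λ₁ + ⋯ + Λ_K = Λ`, the sender can find a
subchannel achieving at least the waterfilling rate: if `c` is the waterfilling level
with `∑_k max(c − σ_k², 0) = Λ`, then
`max_k (1/2)log(1 + Γ/(σ_k² + Λ_k)) ≥ (1/2)log(1 + Γ/c)`. -/
theorem stmt17 {K : ℕ} (hK : 0 < K) (σ : Fin K → ℝ) (hσ : ∀ k, 0 < σ k)
    (Λ Γ : ℝ) (hΛ : 0 < Λ) (hΓ : 0 < Γ)
    (c : ℝ) (hwf : ∑ k, max (c - σ k) 0 = Λ)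
    (L : Fin K → ℝ) (hL0 : ∀ k, 0 ≤ L k) (hLsum : ∑ k, L k = Λ) :
    (1 / 2) * Real.log (1 + Γ / c) ≤
      ⨆ k : Fin K, (1 / 2) * Real.log (1 + Γ / (σ k + L k)) := by
  -- some subchannel has positive waterfilling allocation
  have hex0 : ∃ k : Fin K, 0 < max (c - σ k) 0 := by
    by_contra h
    push_neg at h
    have : ∑ k, max (c - σ k) 0 ≤ 0 := Finset.sum_nonpos (fun k _ => h k)
    linarith [hwf ▸ this]
  obtain ⟨k₀, hk₀⟩ := hex0
  have hcσ : σ k₀ < c := by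
    rcases le_or_gt (c - σ k₀) 0 with h | h
    · simp [max_eq_right h] at hk₀
    · linarith
  have hc : 0 < c := lt_trans (hσ k₀) hcσ
  -- some subchannel has σ k + L k ≤ c
  have hex : ∃ k : Fin K, σ k + L k ≤ c := by
    by_contra h
    push_neg at h
    have hlt : ∑ k, max (c - σ k) 0 < ∑ k, L k := by
      refine Finset.sum_lt_sum (fun k _ => max_le (by linarith [h k]) (hL0 k))
        ⟨k₀, Finset.mem_univ _, ?_⟩
      rw [max_eq_left (by linarith : (0:ℝ) ≤ c - σ k₀)]
      linarith [h k₀]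
    rw [hwf, hLsum] at hlt
    exact lt_irrefl _ hlt
  obtain ⟨k, hk⟩ := hex
  have hpos : 0 < σ k + L k := by linarith [hσ k, hL0 k]
  have hterm : (1 / 2) * Real.log (1 + Γ / c) ≤
      (1 / 2) * Real.log (1 + Γ / (σ k + L k)) := by
    apply mul_le_mul_of_nonneg_left _ (by norm_num)
    apply Real.log_le_log (by positivity)
    gcongr
  exact le_trans hterm (le_ciSup
    ((Set.finite_range (fun k : Fin K => (1/2) * Real.log (1 + Γ / (σ k + L k)))).bddAbove) k)
end
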